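/- Let 1 ≤ p < q ≤ ∞ and put α = 1/p − 1/q (with the convention 1/∞ = 0), and let b ∈ ℕ. Then there is a positive constant C, depending only on p, q and b, such that for every n ∈ ℕ, all Banach spaces X, Y and every bounded linear operator T₀ from X to Y, the diagonal operator T(n) : ℓ_p^n(X) → ℓ_q^n(Y) defined by T(n)(x₁, …, x_n) = (T₀(x₁), …, T₀(x_n)) satisfies f_{nb}(T(n)) ≥ C·‖T₀‖·n^{−α}. -/

import Mathlib

open Metric Set
open scoped ENNReal

/-- The `n`-th (dyadic) entropy number of a bounded linear operator `T : X → Y`: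
the infimum of all `ε > 0` such that the image of the closed unit ball of `X`
can be covered by `2 ^ (n - 1)` closed balls of radius `ε` in `Y`. -/
noncomputable def entropyNum {X Y : Type*} [NormedAddCommGroup X] [NormedSpace ℝ X]
    [NormedAddCommGroup Y] [NormedSpace ℝ Y] (n : ℕ) (T : X →L[ℝ] Y) : ℝ :=
  sInf {ε : ℝ | 0 < ε ∧ ∃ S : Finset Y, S.card ≤ 2 ^ (n - 1) ∧
    T '' closedBall 0 1 ⊆ ⋃ y ∈ S, closedBall y ε}

/-- The `n`-th (dyadic) inner entropy number of a bounded linear operator `T : X → Y`: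
the supremum of all `ε > 0` such that there are `2 ^ (n - 1) + 1` points in the closed
unit ball of `X` whose images under `T` are pairwise at distance at least `2 * ε`. -/
noncomputable def innerEntropyNum {X Y : Type*} [NormedAddCommGroup X] [NormedSpace ℝ X]
    [NormedAddCommGroup Y] [NormedSpace ℝ Y] (n : ℕ) (T : X →L[ℝ] Y) : ℝ :=
  sSup {ε : ℝ | 0 < ε ∧ ∃ x : Fin (2 ^ (n - 1) + 1) → X, (∀ i, ‖x i‖ ≤ 1) ∧
    ∀ i j, i ≠ j → 2 * ε ≤ ‖T (x i) - T (x j)‖}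

section AuxiliaryLemmas

open Finset

/-- Hamming distance on `Fin (n+1)` splits into head and tail. -/
lemma hammingDist_succ {K n : ℕ} (x y : Fin (n + 1) → Fin K) :
    hammingDist x y = (if x 0 = y 0 then 0 else 1) + hammingDist (Fin.tail x) (Fin.tail y) := by
  classical
  simp only [hammingDist]
  rw [Finset.card_filter, Finset.card_filter, Fin.sum_univ_succ]
  congr 1
  · by_cases h : x 0 = y 0 <;> simp [h]

lemma ball_card_bound (K : ℕ) (hK : 1 ≤ K) :
    ∀ (n r : ℕ) (a : Fin n → Fin K),
      (Finset.univ.filter fun x : Fin n → Fin K => hammingDist x a ≤ r).card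
        ≤ 2 ^ n * K ^ r := by
  intro n
  induction n with
  | zero =>
    intro r a
    have : (Finset.univ : Finset (Fin 0 → Fin K)).card = 1 := by
      simp
    calc (Finset.univ.filter fun x : Fin 0 → Fin K => hammingDist x a ≤ r).card
        ≤ (Finset.univ : Finset (Fin 0 → Fin K)).card := Finset.card_filter_le _ _
      _ = 1 := this
      _ ≤ 2 ^ 0 * K ^ r := Nat.mul_pos (Nat.two_pow_pos 0) (Nat.pow_pos hK)
  | succ n ih =>
    intro r a
    classical
    set Φ : (Fin (n + 1) → Fin K) → Fin K × (Fin n → Fin K) :=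
      fun x => (x 0, Fin.tail x) with hΦ
    have hΦinj : Function.Injective Φ := by
      intro x y h
      simp only [hΦ, Prod.mk.injEq] at h
      funext i
      refine Fin.cases ?_ ?_ i
      · exact h.1
      · intro j
        exact congrFun h.2 j
    rcases Nat.eq_zero_or_pos r with rfl | hr
    · -- ball of radius 0 is a single point
      have hsub : (Finset.univ.filter fun x : Fin (n+1) → Fin K => hammingDist x a ≤ 0)
          ⊆ {a} := by
        intro x hx
        simp only [Finset.mem_filter, Nat.le_zero] at hx
        simp [eq_of_hammingDist_eq_zero hx.2]
      calc _ ≤ ({a} : Finset (Fin (n+1) → Fin K)).card := Finset.card_le_card hsub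
        _ = 1 := Finset.card_singleton _
        _ ≤ 2 ^ (n+1) * K ^ 0 := Nat.mul_pos (Nat.two_pow_pos _) (Nat.pow_pos hK)
    · obtain ⟨s, rfl⟩ := Nat.exists_eq_add_of_le hr
      set r := 1 + s
      -- image under Φ is contained in a union of two products
      set B1 : Finset (Fin n → Fin K) :=
        Finset.univ.filter fun y => hammingDist y (Fin.tail a) ≤ r with hB1
      set B2 : Finset (Fin n → Fin K) :=
        Finset.univ.filter fun y => hammingDist y (Fin.tail a) ≤ s with hB2
      have hsub : ((Finset.univ.filter
            fun x : Fin (n+1) → Fin K => hammingDist x a ≤ r).image Φ)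
          ⊆ ({a 0} ×ˢ B1) ∪ (Finset.univ ×ˢ B2) := by
        intro z hz
        obtain ⟨x, hx, rfl⟩ := Finset.mem_image.mp hz
        simp only [Finset.mem_filter, Finset.mem_univ, true_and] at hx
        rw [hammingDist_succ] at hx
        by_cases h0 : x 0 = a 0
        · refine Finset.mem_union_left _ ?_
          simp only [Finset.mem_product, Finset.mem_singleton, hB1, Finset.mem_filter,
            Finset.mem_univ, true_and, hΦ]
          rw [if_pos h0] at hx
          exact ⟨h0, by omega⟩
        · refine Finset.mem_union_right _ ?_
          simp only [Finset.mem_product, Finset.mem_univ, true_and, hB2, Finset.mem_filter, hΦ]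
          rw [if_neg h0] at hx
          omega
      have hcard : (Finset.univ.filter
            fun x : Fin (n+1) → Fin K => hammingDist x a ≤ r).card
          ≤ 1 * B1.card + K * B2.card := by
        rw [← Finset.card_image_of_injective _ hΦinj]
        calc _ ≤ (({a 0} ×ˢ B1) ∪ (Finset.univ ×ˢ B2)).card := Finset.card_le_card hsub
          _ ≤ ({a 0} ×ˢ B1).card + ((Finset.univ : Finset (Fin K)) ×ˢ B2).card :=
              Finset.card_union_le _ _
          _ = 1 * B1.card + K * B2.card := by
              rw [Finset.card_product, Finset.card_product]
              simp
      have h1 : B1.card ≤ 2 ^ n * K ^ r := ih r (Fin.tail a)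
      have h2 : B2.card ≤ 2 ^ n * K ^ s := ih s (Fin.tail a)
      calc _ ≤ 1 * (2 ^ n * K ^ r) + K * (2 ^ n * K ^ s) := by
            refine le_trans hcard ?_
            gcongr
        _ ≤ 2 ^ (n+1) * K ^ r := by
            have : K * (2 ^ n * K ^ s) = 2 ^ n * K ^ r := by ring
            rw [this]; ring_nf; omega

open Finset

lemma pack_lemma {α : Type*} [Fintype α] [DecidableEq α] (dist : α → α → ℕ)
    (hself : ∀ a, dist a a = 0) (hsymm : ∀ a c, dist a c = dist c a) (d B : ℕ) (hd : 1 ≤ d)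
    (hB : ∀ a : α, (Finset.univ.filter fun x => dist x a ≤ d - 1).card ≤ B) :
    ∀ A : Finset α, ∃ S : Finset α, S ⊆ A ∧
      (∀ c ∈ S, ∀ c' ∈ S, c ≠ c' → d ≤ dist c c') ∧ A.card ≤ S.card * B := by
  intro A
  induction A using Finset.strongInduction with
  | _ A ih =>
    rcases A.eq_empty_or_nonempty with rfl | ⟨a, ha⟩
    · exact ⟨∅, by simp⟩
    · set A' := A.filter (fun x => ¬ dist x a ≤ d - 1) with hA'
      have haA' : a ∉ A' := by simp [hA', hself, Nat.zero_le]
      have hss : A' ⊂ A := by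
        refine Finset.ssubset_iff_of_subset (Finset.filter_subset _ _) |>.mpr ⟨a, ha, haA'⟩
      obtain ⟨S, hSA, hsep, hcard⟩ := ih A' hss
      have haS : a ∉ S := fun h => haA' (hSA h)
      refine ⟨insert a S, ?_, ?_, ?_⟩
      · intro x hx
        rcases Finset.mem_insert.mp hx with rfl | hx
        · exact ha
        · exact Finset.filter_subset _ _ (hSA hx)
      · intro c hc c' hc' hne
        have key : ∀ s ∈ S, d ≤ dist s a := by
          intro s hs
          have := (Finset.mem_filter.mp (hSA hs)).2
          omega
        rcases Finset.mem_insert.mp hc with h1 | h1 <;>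
        rcases Finset.mem_insert.mp hc' with h2 | h2
        · exact absurd (h1.trans h2.symm) hne
        · rw [h1, hsymm]; exact key c' h2
        · rw [h2]; exact key c h1
        · exact hsep c h1 c' h2 hne
      · have hsplit : A.card ≤ A'.card + B := by
          have := Finset.card_filter_add_card_filter_not
            (s := A) (p := fun x => dist x a ≤ d - 1)
          rw [← hA'] at this
          have hsubB : (A.filter fun x => dist x a ≤ d - 1).card ≤ B :=
            le_trans (Finset.card_le_card (Finset.filter_subset_filter _ (Finset.subset_univ A)))
              (hB a)
          omega
        rw [Finset.card_insert_of_notMem haS]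
        calc A.card ≤ A'.card + B := hsplit
          _ ≤ S.card * B + B := by omega
          _ = (S.card + 1) * B := by ring

open Finset

lemma exists_code (b n : ℕ) (hb : 1 ≤ b) (hn : 1 ≤ n) :
    ∃ S : Finset (Fin n → Fin (2 ^ (2 * b + 4))),
      (∀ c ∈ S, ∀ c' ∈ S, c ≠ c' → (n + 1) / 2 ≤ hammingDist c c') ∧
      2 ^ (n * b - 1) + 1 ≤ S.card := by
  classical
  set K := 2 ^ (2 * b + 4) with hK
  have hK1 : 1 ≤ K := Nat.one_le_two_pow
  set d := (n + 1) / 2 with hd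
  have hd1 : 1 ≤ d := by omega
  set r := d - 1 with hr
  have h2r : 2 * r + 1 ≤ n := by omega
  set B := 2 ^ n * K ^ r with hB
  have hBpos : 0 < B := Nat.mul_pos (Nat.two_pow_pos _) (Nat.pow_pos (by omega))
  obtain ⟨S, -, hsep, hcard⟩ := pack_lemma (fun x y : Fin n → Fin K => hammingDist x y)
    (fun a => hammingDist_self a) (fun a c => hammingDist_comm a c) d B hd1
    (fun a => ball_card_bound K hK1 n r a) Finset.univ
  refine ⟨S, hsep, ?_⟩
  have huniv : (Finset.univ : Finset (Fin n → Fin K)).card = K ^ n := by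
    simp [hK]
  rw [huniv] at hcard
  -- key arithmetic: (2^(n*b-1)+1) * B ≤ K^n
  have hexp : n * b - 1 + 1 = n * b := by
    have : 1 ≤ n * b := Nat.one_le_iff_ne_zero.mpr (by positivity)
    omega
  have h1 : 2 ^ (n * b - 1) + 1 ≤ 2 ^ (n * b) := by
    have h2 : 2 ^ (n * b) = 2 ^ (n * b - 1) * 2 := by
      rw [← pow_succ, hexp]
    have := Nat.one_le_two_pow (n := n * b - 1)
    omega
  have hkey : (2 ^ (n * b - 1) + 1) * B ≤ K ^ n := by
    have hexp2 : n * b + n + (2 * b + 4) * r ≤ (2 * b + 4) * n := by nlinarith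
    calc (2 ^ (n * b - 1) + 1) * B ≤ 2 ^ (n * b) * (2 ^ n * K ^ r) := by
          rw [hB]; exact Nat.mul_le_mul_right _ h1
      _ = 2 ^ (n * b + n + (2 * b + 4) * r) := by
          rw [hK, ← pow_mul, ← pow_add, ← pow_add, Nat.add_assoc]
      _ ≤ 2 ^ ((2 * b + 4) * n) := Nat.pow_le_pow_right (by omega) hexp2
      _ = K ^ n := by rw [hK, ← pow_mul]
  have := le_trans hkey hcard
  exact Nat.le_of_mul_le_mul_right this hBpos


lemma one_le_abs_natCast_sub {a b : ℕ} (h : a ≠ b) : 1 ≤ |(a : ℝ) - (b : ℝ)| := by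
  have h1 : (1 : ℤ) ≤ |(a : ℤ) - (b : ℤ)| := Int.one_le_abs (by omega)
  calc (1 : ℝ) ≤ ((|(a : ℤ) - (b : ℤ)| : ℤ) : ℝ) := by exact_mod_cast h1
    _ = |(a : ℝ) - (b : ℝ)| := by push_cast; ring_nf

lemma exists_norming {X Y : Type} [NormedAddCommGroup X] [NormedSpace ℝ X]
    [NormedAddCommGroup Y] [NormedSpace ℝ Y] (T0 : X →L[ℝ] Y) (h : T0 ≠ 0) :
    ∃ x0 : X, ‖x0‖ ≤ 1 ∧ ‖T0‖ / 2 ≤ ‖T0 x0‖ := by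
  by_contra hcon
  push_neg at hcon
  have hpos : 0 < ‖T0‖ := norm_pos_iff.mpr h
  have hle : ‖T0‖ ≤ ‖T0‖ / 2 := by
    refine T0.opNorm_le_bound' (by positivity) fun x hx => ?_
    set y := ‖x‖⁻¹ • x with hy
    have hxpos : 0 < ‖x‖ := lt_of_le_of_ne (norm_nonneg x) (Ne.symm hx)
    have hyn : ‖y‖ ≤ 1 := by
      rw [hy, norm_smul, norm_inv, norm_norm, inv_mul_cancel₀ hx]
    have hTy := hcon y hyn
    have hxy : T0 x = ‖x‖ • T0 y := by
      rw [hy, map_smul, smul_smul, mul_inv_cancel₀ hx, one_smul]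
    rw [hxy, norm_smul, Real.norm_eq_abs, abs_of_pos hxpos]
    have := le_of_lt hTy
    calc ‖x‖ * ‖T0 y‖ ≤ ‖x‖ * (‖T0‖ / 2) := by gcongr
      _ = ‖T0‖ / 2 * ‖x‖ := by ring
  linarith
end AuxiliaryLemmas

/-- For every `b ∈ ℕ` there is a constant `C > 0`, depending only on `p`, `q` and `b`,
such that the diagonal operator `T(n) = (T₀, …, T₀) : ℓ_p^n(X) → ℓ_q^n(Y)` satisfies
`f_{nb}(T(n)) ≥ C ‖T₀‖ n^{-α}` with `α = 1/p - 1/q`. -/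
theorem inner_entropy_diagonal_lower (p q : ℝ≥0∞) [Fact (1 ≤ p)] [Fact (1 ≤ q)]
    (hpq : p < q) (b : ℕ) (hb : 1 ≤ b) :
    ∃ C : ℝ, 0 < C ∧
      ∀ (n : ℕ) (hn : 1 ≤ n)
        (X Y : Type) [NormedAddCommGroup X] [NormedSpace ℝ X]
        [NormedAddCommGroup Y] [NormedSpace ℝ Y]
        (T0 : X →L[ℝ] Y)
        (T : PiLp p (fun _ : Fin n => X) →L[ℝ] PiLp q (fun _ : Fin n => Y)),
        (∀ x i, T x i = T0 (x i)) →
        C * ‖T0‖ * (n : ℝ) ^ (-(1 / p.toReal - 1 / q.toReal)) ≤ innerEntropyNum (n * b) T := by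
  classical
  have hp1 : 1 ≤ p := Fact.out
  have hq1 : 1 ≤ q := Fact.out
  have hptop : p ≠ ∞ := (hpq.trans_le le_top).ne
  have hpr1 : 1 ≤ p.toReal := by
    have := ENNReal.toReal_mono hptop hp1
    simpa using this
  have hprpos : 0 < p.toReal := lt_of_lt_of_le one_pos hpr1
  have hqrnn : 0 ≤ 1 / q.toReal := one_div_nonneg.mpr ENNReal.toReal_nonneg
  have hqrle1 : 1 / q.toReal ≤ 1 := by
    by_cases hq : q = ∞
    · simp [hq]
    · have h1 : 1 ≤ q.toReal := by
        have := ENNReal.toReal_mono hq hq1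
        simpa using this
      rw [div_le_one (lt_of_lt_of_le one_pos h1)]
      exact h1
  set K : ℕ := 2 ^ (2 * b + 4) with hK
  have hKpos : (0:ℝ) < K := by positivity
  refine ⟨((8 : ℝ) * K)⁻¹, by positivity, ?_⟩
  intro n hn X Y _ _ _ _ T0 T hT
  by_cases hT0 : T0 = 0
  · rw [hT0]
    simp only [norm_zero, mul_zero, zero_mul]
    exact Real.sSup_nonneg fun x hx => hx.1.le
  -- main case
  have hT0pos : 0 < ‖T0‖ := norm_pos_iff.mpr hT0
  obtain ⟨x0, hx01, hx0norm⟩ := exists_norming T0 hT0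
  have hnpos : (0:ℝ) < n := by exact_mod_cast hn
  obtain ⟨S, hsepS, hScard⟩ := exists_code b n hb hn
  set N := 2 ^ (n * b - 1) + 1 with hN
  have hNle : N ≤ Fintype.card ↥S := by rw [Fintype.card_coe]; exact hScard
  set g : Fin N → (Fin n → Fin K) :=
    fun i => ((Fintype.equivFin ↥S).symm (Fin.castLE hNle i) : Fin n → Fin K) with hg
  have hgS : ∀ i, g i ∈ S := fun i => ((Fintype.equivFin ↥S).symm (Fin.castLE hNle i)).2
  have hginj : Function.Injective g := by
    intro i j hij
    have h2 := (Fintype.equivFin ↥S).symm.injective (Subtype.coe_injective hij)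
    exact Fin.castLE_injective hNle h2
  set δ : ℝ := (K : ℝ)⁻¹ * (n : ℝ) ^ (-(1 / p.toReal)) with hδ
  have hδpos : 0 < δ := by
    rw [hδ]
    exact mul_pos (inv_pos.mpr hKpos) (Real.rpow_pos_of_pos hnpos _)
  set x : Fin N → PiLp p (fun _ : Fin n => X) :=
    fun i => WithLp.toLp p (fun k => (((g i k : ℕ) : ℝ) * δ) • x0) with hx
  -- norm bound on the points
  have hxnorm : ∀ i, ‖x i‖ ≤ 1 := by
    intro i
    rw [PiLp.norm_eq_sum hprpos]
    have hcoord : ∀ k, ‖x i k‖ ≤ (n : ℝ) ^ (-(1 / p.toReal)) := by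
      intro k
      have hxik : x i k = (((g i k : ℕ) : ℝ) * δ) • x0 := rfl
      rw [hxik, norm_smul, Real.norm_eq_abs,
        abs_of_nonneg (mul_nonneg (Nat.cast_nonneg _) hδpos.le)]
      have h1 : ((g i k : ℕ) : ℝ) ≤ (K : ℝ) := by
        exact_mod_cast (g i k).is_lt.le
      calc ((g i k : ℕ) : ℝ) * δ * ‖x0‖ ≤ (K : ℝ) * δ * 1 := by
            apply mul_le_mul (by gcongr) hx01 (norm_nonneg _)
            positivity
        _ = (n : ℝ) ^ (-(1 / p.toReal)) := by
            rw [hδ, mul_one, ← mul_assoc, mul_inv_cancel₀ hKpos.ne', one_mul]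
    have hsum : (∑ k, ‖x i k‖ ^ p.toReal) ≤ (n : ℝ) * ((n : ℝ) ^ (-(1 / p.toReal))) ^ p.toReal := by
      calc (∑ k, ‖x i k‖ ^ p.toReal)
          ≤ ∑ _k : Fin n, ((n : ℝ) ^ (-(1 / p.toReal))) ^ p.toReal :=
            Finset.sum_le_sum fun k _ =>
              Real.rpow_le_rpow (norm_nonneg _) (hcoord k) hprpos.le
        _ = (n : ℝ) * ((n : ℝ) ^ (-(1 / p.toReal))) ^ p.toReal := by
            rw [Finset.sum_const, Finset.card_univ, Fintype.card_fin, nsmul_eq_mul]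
    have hnn : ((n : ℝ) ^ (-(1 / p.toReal))) ^ p.toReal = (n : ℝ)⁻¹ := by
      rw [← Real.rpow_mul hnpos.le]
      rw [show -(1 / p.toReal) * p.toReal = -1 by field_simp]
      exact Real.rpow_neg_one _
    calc (∑ k, ‖x i k‖ ^ p.toReal) ^ (1 / p.toReal)
        ≤ ((n : ℝ) * (n : ℝ)⁻¹) ^ (1 / p.toReal) := by
          apply Real.rpow_le_rpow
            (Finset.sum_nonneg fun k _ => Real.rpow_nonneg (norm_nonneg _) _)
            ?_ (by positivity)
          rw [← hnn]; exact hsum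
      _ = 1 := by rw [mul_inv_cancel₀ hnpos.ne', Real.one_rpow]
  -- the Hamming distance parameter
  set d : ℕ := (n + 1) / 2 with hd
  have hdhalf : (n : ℝ) / 2 ≤ (d : ℝ) := by
    have h2d : n ≤ 2 * d := by omega
    have : (n : ℝ) ≤ 2 * (d : ℝ) := by exact_mod_cast h2d
    linarith
  have hdpos : (0:ℝ) < d := by
    have : 1 ≤ d := by omega
    exact_mod_cast lt_of_lt_of_le one_pos this
  -- separation of images
  have hsepnorm : ∀ i j : Fin N, i ≠ j →
      (d : ℝ) ^ (1 / q.toReal) * (δ * ‖T0 x0‖) ≤ ‖T (x i) - T (x j)‖ := by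
    intro i j hij
    have hgne : g i ≠ g j := fun h => hij (hginj h)
    have hdistS : d ≤ hammingDist (g i) (g j) := hsepS _ (hgS i) _ (hgS j) hgne
    have hcoordeq : ∀ k, (T (x i) - T (x j)) k
        = ((((g i k : ℕ) : ℝ) - ((g j k : ℕ) : ℝ)) * δ) • T0 x0 := by
      intro k
      have h1 : (T (x i) - T (x j)) k = T (x i) k - T (x j) k := rfl
      rw [h1, hT, hT]
      have h2 : x i k = (((g i k : ℕ) : ℝ) * δ) • x0 := rfl
      have h3 : x j k = (((g j k : ℕ) : ℝ) * δ) • x0 := rfl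
      rw [h2, h3, map_smul, map_smul, ← sub_smul, ← sub_mul]
    have hcoordnorm : ∀ k, g i k ≠ g j k →
        δ * ‖T0 x0‖ ≤ ‖(T (x i) - T (x j)) k‖ := by
      intro k hk
      rw [hcoordeq k, norm_smul, Real.norm_eq_abs, abs_mul, abs_of_nonneg hδpos.le]
      have h1 : 1 ≤ |((g i k : ℕ) : ℝ) - ((g j k : ℕ) : ℝ)| :=
        one_le_abs_natCast_sub (fun hc => hk (Fin.val_injective hc))
      calc δ * ‖T0 x0‖ = 1 * (δ * ‖T0 x0‖) := (one_mul _).symm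
        _ ≤ |((g i k : ℕ) : ℝ) - ((g j k : ℕ) : ℝ)| * (δ * ‖T0 x0‖) := by
            apply mul_le_mul_of_nonneg_right h1
            exact mul_nonneg hδpos.le (norm_nonneg _)
        _ = |((g i k : ℕ) : ℝ) - ((g j k : ℕ) : ℝ)| * δ * ‖T0 x0‖ := by ring
    by_cases hqtop : q = ∞
    · subst hqtop
      simp only [ENNReal.toReal_top, div_zero, Real.rpow_zero, one_mul]
      obtain ⟨k0, hk0⟩ := Function.ne_iff.mp hgne
      have hbdd : BddAbove (Set.range fun k => ‖(T (x i) - T (x j)) k‖) :=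
        Set.Finite.bddAbove (Set.finite_range _)
      calc δ * ‖T0 x0‖ ≤ ‖(T (x i) - T (x j)) k0‖ := hcoordnorm k0 hk0
        _ ≤ ⨆ k, ‖(T (x i) - T (x j)) k‖ := le_ciSup hbdd k0
        _ = ‖T (x i) - T (x j)‖ := (PiLp.norm_eq_ciSup _).symm
    · have hqr1 : 1 ≤ q.toReal := by
        have := ENNReal.toReal_mono hqtop hq1
        simpa using this
      have hqrpos : 0 < q.toReal := lt_of_lt_of_le one_pos hqr1
      rw [PiLp.norm_eq_sum hqrpos]
      set Df : Finset (Fin n) := Finset.univ.filter (fun k => g i k ≠ g j k) with hDf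
      have hDfcard : d ≤ Df.card := hdistS
      have hbase : (0:ℝ) ≤ δ * ‖T0 x0‖ := mul_nonneg hδpos.le (norm_nonneg _)
      have key : (d : ℝ) * (δ * ‖T0 x0‖) ^ q.toReal
          ≤ ∑ k, ‖(T (x i) - T (x j)) k‖ ^ q.toReal := by
        calc (d : ℝ) * (δ * ‖T0 x0‖) ^ q.toReal
            ≤ (Df.card : ℝ) * (δ * ‖T0 x0‖) ^ q.toReal := by
              apply mul_le_mul_of_nonneg_right (by exact_mod_cast hDfcard)
              exact Real.rpow_nonneg hbase _
          _ = ∑ _k ∈ Df, (δ * ‖T0 x0‖) ^ q.toReal := by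
              rw [Finset.sum_const, nsmul_eq_mul]
          _ ≤ ∑ k ∈ Df, ‖(T (x i) - T (x j)) k‖ ^ q.toReal := by
              apply Finset.sum_le_sum
              intro k hk
              exact Real.rpow_le_rpow hbase
                (hcoordnorm k (Finset.mem_filter.mp hk).2) hqrpos.le
          _ ≤ ∑ k, ‖(T (x i) - T (x j)) k‖ ^ q.toReal := by
              apply Finset.sum_le_sum_of_subset_of_nonneg (Finset.subset_univ _)
              intro k _ _
              exact Real.rpow_nonneg (norm_nonneg _) _
      have hrw : (d : ℝ) ^ (1 / q.toReal) * (δ * ‖T0 x0‖)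
          = ((d : ℝ) * (δ * ‖T0 x0‖) ^ q.toReal) ^ (1 / q.toReal) := by
        rw [Real.mul_rpow hdpos.le (Real.rpow_nonneg hbase _),
          ← Real.rpow_mul hbase, mul_one_div, div_self hqrpos.ne', Real.rpow_one]
      rw [hrw]
      exact Real.rpow_le_rpow (by positivity) key (by positivity)
  -- conclude
  have hdq : (n : ℝ) ^ (1 / q.toReal) / 2 ≤ (d : ℝ) ^ (1 / q.toReal) := by
    have h1 : ((n : ℝ) / 2) ^ (1 / q.toReal) ≤ (d : ℝ) ^ (1 / q.toReal) :=
      Real.rpow_le_rpow (by positivity) hdhalf hqrnn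
    have h2 : ((n : ℝ) / 2) ^ (1 / q.toReal)
        = (n : ℝ) ^ (1 / q.toReal) / (2 : ℝ) ^ (1 / q.toReal) :=
      Real.div_rpow hnpos.le (by norm_num) _
    have h3 : (2 : ℝ) ^ (1 / q.toReal) ≤ 2 := by
      calc (2 : ℝ) ^ (1 / q.toReal) ≤ (2 : ℝ) ^ (1 : ℝ) :=
          Real.rpow_le_rpow_of_exponent_le one_le_two hqrle1
        _ = 2 := Real.rpow_one 2
    have h4 : (n : ℝ) ^ (1 / q.toReal) / 2 ≤ (n : ℝ) ^ (1 / q.toReal) / (2 : ℝ) ^ (1 / q.toReal) := by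
      apply div_le_div_of_nonneg_left (Real.rpow_nonneg hnpos.le _) _ h3
      positivity
    linarith
  have hsplit : (n : ℝ) ^ (-(1 / p.toReal - 1 / q.toReal))
      = (n : ℝ) ^ (1 / q.toReal) * (n : ℝ) ^ (-(1 / p.toReal)) := by
    rw [← Real.rpow_add hnpos]
    congr 1
    ring
  set ε : ℝ := ((8 : ℝ) * K)⁻¹ * ‖T0‖ * (n : ℝ) ^ (-(1 / p.toReal - 1 / q.toReal)) with hε
  have hεpos : 0 < ε := by
    rw [hε]
    apply mul_pos (mul_pos (by positivity) hT0pos) (Real.rpow_pos_of_pos hnpos _)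
  have hεle : 2 * ε ≤ (d : ℝ) ^ (1 / q.toReal) * (δ * ‖T0 x0‖) := by
    have hst : ((n : ℝ) ^ (1 / q.toReal) / 2) * (δ * (‖T0‖ / 2))
        ≤ (d : ℝ) ^ (1 / q.toReal) * (δ * ‖T0 x0‖) := by
      apply mul_le_mul hdq ?_ ?_ (Real.rpow_nonneg hdpos.le _)
      · exact mul_le_mul_of_nonneg_left hx0norm hδpos.le
      · exact mul_nonneg hδpos.le (by positivity)
    refine le_trans (le_of_eq ?_) hst
    rw [hε, hsplit, hδ, mul_inv]
    field_simp
    ring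
  refine le_csSup ?_ ?_
  · refine ⟨‖T‖, ?_⟩
    rintro e ⟨hepos, y, hynorm, hsepe⟩
    have h01 : (0 : Fin (2 ^ (n * b - 1) + 1)) ≠ 1 := by
      have hval : (1 : Fin (2 ^ (n * b - 1) + 1)).val = 1 := by
        rw [Fin.val_one']
        exact Nat.mod_eq_of_lt (by have := Nat.one_le_two_pow (n := n * b - 1); omega)
      intro hcon
      have : (0 : Fin (2 ^ (n * b - 1) + 1)).val = (1 : Fin (2 ^ (n * b - 1) + 1)).val := by
        rw [hcon]
      rw [hval] at this
      simp at this
    have hsep01 := hsepe 0 1 h01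
    have hb1 : ‖T (y 0) - T (y 1)‖ ≤ 2 * ‖T‖ := by
      calc ‖T (y 0) - T (y 1)‖ ≤ ‖T (y 0)‖ + ‖T (y 1)‖ := norm_sub_le _ _
        _ ≤ ‖T‖ * ‖y 0‖ + ‖T‖ * ‖y 1‖ := add_le_add (T.le_opNorm _) (T.le_opNorm _)
        _ ≤ ‖T‖ * 1 + ‖T‖ * 1 := by
            gcongr <;> [exact hynorm 0; exact hynorm 1]
        _ = 2 * ‖T‖ := by ring
    linarith
  · refine ⟨hεpos, x, hxnorm, ?_⟩
    intro i j hij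
    exact le_trans hεle (hsepnorm i j hij)
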